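/- Let q = 2^l and let Φ : P¹ → P¹ over the algebraic closure of F_q be given by Φ([X : Y]) = [a₁X² + b₁XY + c₁Y² : a₂X² + b₂XY + c₂Y²], where the two quadratic forms are coprime and b₁ ≠ 0 or b₂ ≠ 0. Then Φ is separable of degree 2 and has exactly one ramification point. -/

import Mathlib

open Polynomial

-- helper: multiplicity ≥ 2 iff value and derivative vanish
lemma two_le_rootMultiplicity_iff' {K : Type*} [Field K] {F : K[X]} (hF : F ≠ 0) (x : K) :
    2 ≤ F.rootMultiplicity x ↔ F.eval x = 0 ∧ F.derivative.eval x = 0 := by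
  have h := Polynomial.lt_rootMultiplicity_iff_isRoot_iterate_derivative_of_mem_nonZeroDivisors
    (p := F) (t := x) (n := 1) hF (by simpa using Submonoid.one_mem _)
  rw [show (2 : ℕ) ≤ F.rootMultiplicity x ↔ 1 < F.rootMultiplicity x from Iff.rfl, h]
  constructor
  · intro h; exact ⟨by simpa using h 0 (by norm_num), by simpa using h 1 le_rfl⟩
  · rintro ⟨h0, h1⟩ m hm; interval_cases m <;> simpa

lemma reverse_quad {K : Type*} [Field K] {a b c : K}
    (h : C a * X ^ 2 + C b * X + C c ≠ (0 : K[X])) :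
    X ^ (2 - (C a * X ^ 2 + C b * X + C c).natDegree) * (C a * X ^ 2 + C b * X + C c).reverse
      = C c * X ^ 2 + C b * X + C a := by
  by_cases haz : a = 0
  · subst haz
    by_cases hbz : b = 0
    · subst hbz
      have hc : c ≠ 0 := by simpa using h
      simp only [map_zero, zero_mul, zero_add]
      rw [show ((C c : K[X]).natDegree) = 0 from natDegree_C c]
      rw [show (C c : K[X]).reverse = C c by simp [reverse]]
      ring
    · simp only [map_zero, zero_mul, zero_add]
      rw [show (C b * X + C c : K[X]).natDegree = 1 from natDegree_linear hbz]
      rw [show (C b * X + C c : K[X]).reverse = C c * X + C b by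
        rw [reverse, natDegree_linear hbz]
        rw [show (C b * X + C c : K[X]) = C b * X ^ 1 + C c * X ^ 0 by ring]
        rw [reflect_add, reflect_C_mul_X_pow, reflect_C_mul_X_pow]
        norm_num; ring]
      ring
  · rw [show (C a * X ^ 2 + C b * X + C c : K[X]).natDegree = 2 from natDegree_quadratic haz]
    rw [show (C a * X ^ 2 + C b * X + C c : K[X]).reverse = C c * X ^ 2 + C b * X + C a by
      rw [reverse, natDegree_quadratic haz]
      rw [show (C a * X ^ 2 + C b * X + C c : K[X]) = C a * X ^ 2 + C b * X ^ 1 + C c * X ^ 0 by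
        ring]
      rw [reflect_add, reflect_add, reflect_C_mul_X_pow, reflect_C_mul_X_pow, reflect_C_mul_X_pow]
      norm_num; ring]
    ring

lemma coeff_quad0' {K : Type*} [Field K] (A B : K) : (C A * X ^ 2 + C B : K[X]).coeff 0 = B := by
  rw [coeff_add, coeff_C_mul, coeff_X_pow, coeff_C]; norm_num
lemma coeff_quad2' {K : Type*} [Field K] (A B : K) : (C A * X ^ 2 + C B : K[X]).coeff 2 = A := by
  rw [coeff_add, coeff_C_mul, coeff_X_pow, coeff_C]; norm_num
lemma coeff_G1' {K : Type*} [Field K] (D A : K) :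
    (C D * X ^ 2 + C A * X : K[X]).coeff 1 = A := by
  rw [coeff_add, coeff_C_mul, coeff_X_pow, coeff_C_mul, coeff_X]; norm_num
lemma coeff_G2' {K : Type*} [Field K] (D A : K) :
    (C D * X ^ 2 + C A * X : K[X]).coeff 2 = D := by
  rw [coeff_add, coeff_C_mul, coeff_X_pow, coeff_C_mul, coeff_X]; norm_num


/-- Ramification index of the rational self-map `u/v` of `P¹` (points modelled as
`Option K`, `none = ∞`) at a point; cf. the substitution `x ↦ 1/x` at infinity. -/
noncomputable def ramIdx {K : Type*} [Field K] (u v : Polynomial K) : Option K → ℕ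
  | some x => (C (v.eval x) * u - C (u.eval x) * v).rootMultiplicity x
  | none =>
      let d := max u.natDegree v.natDegree
      let U := X ^ (d - u.natDegree) * u.reverse
      let V := X ^ (d - v.natDegree) * v.reverse
      (C (V.eval 0) * U - C (U.eval 0) * V).rootMultiplicity 0

/-- In characteristic 2, the map `Φ([X:Y]) = [a₁X²+b₁XY+c₁Y² : a₂X²+b₂XY+c₂Y²]` of `P¹`
over the algebraic closure of `F_q` (`q = 2^l`), with coprime quadratic forms and
`b₁ ≠ 0` or `b₂ ≠ 0`, is separable of degree 2 and has exactly one ramification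
point.  (The forms being coprime means their dehomogenizations `u, v` are coprime and
`a₁, a₂` are not both zero.) -/
theorem quadratic_map_one_ramification_point_char_two {K : Type*} [Field K]
    [IsAlgClosed K] [CharP K 2]
    (a₁ b₁ c₁ a₂ b₂ c₂ : K) (u v : Polynomial K)
    (hu : u = C a₁ * X ^ 2 + C b₁ * X + C c₁) (hv : v = C a₂ * X ^ 2 + C b₂ * X + C c₂)
    (hcop : IsCoprime u v) (ha : ¬ (a₁ = 0 ∧ a₂ = 0)) (hb : b₁ ≠ 0 ∨ b₂ ≠ 0) :
    derivative u * v - u * derivative v ≠ 0 ∧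
      max u.natDegree v.natDegree = 2 ∧
      {P : Option K | 2 ≤ ramIdx u v P}.ncard = 1 := by
  have h2 : (2 : K) = 0 := CharTwo.two_eq_zero
  -- coefficients
  have huc2 : u.coeff 2 = a₁ := by simp [hu, coeff_C]
  have huc1 : u.coeff 1 = b₁ := by simp [hu, coeff_C]
  have hvc2 : v.coeff 2 = a₂ := by simp [hv, coeff_C]
  have hvc1 : v.coeff 1 = b₂ := by simp [hv, coeff_C]
  -- derivatives
  have hdu : derivative u = C b₁ := by
    rw [hu]; simp [derivative_X_pow, h2, one_add_one_eq_two]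
  have hdv : derivative v = C b₂ := by
    rw [hv]; simp [derivative_X_pow, h2, one_add_one_eq_two]
  -- linear combination identity
  have hlin : ∀ p q : K, C p * v - C q * u
      = C (p * a₂ - q * a₁) * X ^ 2 + C (p * b₂ - q * b₁) * X + C (p * c₂ - q * c₁) := by
    intro p q; rw [hu, hv]; simp only [map_sub, map_mul]; ring
  -- u, v are nonzero
  have hune : u ≠ 0 := by
    intro h
    have ha1 : a₁ = 0 := by rw [← huc2, h, coeff_zero]
    have ha2 : a₂ ≠ 0 := fun h2 => ha ⟨ha1, h2⟩
    have : IsUnit v := isCoprime_zero_left.mp (h ▸ hcop)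
    have := natDegree_eq_zero_of_isUnit this
    exact ha2 (by rw [← hvc2]; exact coeff_eq_zero_of_natDegree_lt (by omega))
  have hvne : v ≠ 0 := by
    intro h
    have ha2 : a₂ = 0 := by rw [← hvc2, h, coeff_zero]
    have ha1 : a₁ ≠ 0 := fun h1 => ha ⟨h1, ha2⟩
    have : IsUnit u := isCoprime_zero_right.mp (h ▸ hcop)
    have := natDegree_eq_zero_of_isUnit this
    exact ha1 (by rw [← huc2]; exact coeff_eq_zero_of_natDegree_lt (by omega))
  -- if a nonzero-coefficient multiple relation holds, contradiction
  have key : ∀ i : ℕ, 0 < i → ∀ q : K, C (u.coeff i) * v = C q * u → u.coeff i = 0 := by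
    intro i hi q h
    by_contra hp
    have hdvd : u ∣ C (u.coeff i) * v := h ▸ Dvd.intro_left (C q) rfl
    have := hcop.dvd_of_dvd_mul_right hdvd
    have hunit : IsUnit u := isUnit_of_dvd_unit this (isUnit_C.mpr (isUnit_iff_ne_zero.mpr hp))
    have := natDegree_eq_zero_of_isUnit hunit
    exact hp (coeff_eq_zero_of_natDegree_lt (by omega))
  have key' : ∀ i : ℕ, 0 < i → ∀ q : K, C (v.coeff i) * u = C q * v → v.coeff i = 0 := by
    intro i hi q h
    by_contra hp
    have hdvd : v ∣ C (v.coeff i) * u := h ▸ Dvd.intro_left (C q) rfl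
    have := hcop.symm.dvd_of_dvd_mul_right hdvd
    have hunit : IsUnit v := isUnit_of_dvd_unit this (isUnit_C.mpr (isUnit_iff_ne_zero.mpr hp))
    have := natDegree_eq_zero_of_isUnit hunit
    exact hp (coeff_eq_zero_of_natDegree_lt (by omega))
  -- A and B not both zero
  have keyAB : ¬ (b₁ * a₂ - b₂ * a₁ = 0 ∧ b₁ * c₂ - b₂ * c₁ = 0) := by
    rintro ⟨hA, hB⟩
    have h0 : C b₁ * v - C b₂ * u = 0 := by
      rw [hlin b₁ b₂, hA, hB]
      have : b₁ * b₂ - b₂ * b₁ = 0 := by ring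
      rw [this]; simp
    rw [sub_eq_zero] at h0
    rcases hb with h1 | h1
    · exact h1 (by rw [← huc1]; exact key 1 one_pos b₂ (by rw [huc1]; exact h0))
    · exact h1 (by rw [← hvc1]; exact key' 1 one_pos b₁ (by rw [hvc1]; exact h0.symm))
  -- A = 0 implies D ≠ 0
  have keyAD : b₁ * a₂ - b₂ * a₁ = 0 → a₂ * c₁ - a₁ * c₂ ≠ 0 := by
    intro hA hD
    have h0 : C a₁ * v - C a₂ * u = 0 := by
      rw [hlin a₁ a₂]
      have e1 : a₁ * a₂ - a₂ * a₁ = 0 := by ring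
      have e2 : a₁ * b₂ - a₂ * b₁ = 0 := by linear_combination -hA
      have e3 : a₁ * c₂ - a₂ * c₁ = 0 := by linear_combination -hD
      rw [e1, e2, e3]; simp
    rw [sub_eq_zero] at h0
    rcases (not_and_or.mp ha) with h1 | h1
    · exact h1 (by rw [← huc2]; exact key 2 two_pos a₂ (by rw [huc2]; exact h0))
    · exact h1 (by rw [← hvc2]; exact key' 2 two_pos a₁ (by rw [hvc2]; exact h0.symm))
  -- the Wronskian
  have hW : derivative u * v - u * derivative v
      = C (b₁ * a₂ - b₂ * a₁) * X ^ 2 + C (b₁ * c₂ - b₂ * c₁) := by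
    rw [hdu, hdv, mul_comm u (C b₂), hlin b₁ b₂]
    have : b₁ * b₂ - b₂ * b₁ = 0 := by ring
    rw [this]; simp
  have goal1 : derivative u * v - u * derivative v ≠ 0 := by
    rw [hW]; intro h
    apply keyAB
    constructor
    · have := congrArg (fun p => coeff p 2) h
      simpa only [coeff_quad2', coeff_zero] using this
    · have := congrArg (fun p => coeff p 0) h
      simpa only [coeff_quad0', coeff_zero] using this
  -- degrees
  have hdegu : u.natDegree ≤ 2 := by rw [hu]; exact natDegree_quadratic_le
  have hdegv : v.natDegree ≤ 2 := by rw [hv]; exact natDegree_quadratic_le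
  have goal2 : max u.natDegree v.natDegree = 2 := by
    rcases (not_and_or.mp ha) with h1 | h1
    · have : u.natDegree = 2 := by rw [hu]; exact natDegree_quadratic h1
      omega
    · have : v.natDegree = 2 := by rw [hv]; exact natDegree_quadratic h1
      omega
  refine ⟨goal1, goal2, ?_⟩
  -- u and v have no common root
  have hnoroot : ∀ x : K, u.eval x = 0 → v.eval x = 0 → False := by
    obtain ⟨p, q, hpq⟩ := hcop
    intro x h1 h2
    have := congrArg (eval x) hpq
    simp [h1, h2] at this
  -- the numerator polynomial at a finite point is nonzero
  have hFxne : ∀ x : K, C (v.eval x) * u - C (u.eval x) * v ≠ 0 := by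
    intro x h
    rw [sub_eq_zero] at h
    by_cases hvx : v.eval x = 0
    · have hux : u.eval x ≠ 0 := fun h' => hnoroot x h' hvx
      rw [hvx] at h
      simp only [map_zero, zero_mul] at h
      exact hvne (by
        have := h.symm
        rcases mul_eq_zero.mp this with h' | h'
        · exact absurd (by simpa using h') hux
        · exact h')
    · have hdvd : v ∣ C (v.eval x) * u := h ▸ Dvd.intro_left (C (u.eval x)) rfl
      have := hcop.symm.dvd_of_dvd_mul_right hdvd
      have hunit : IsUnit v := isUnit_of_dvd_unit this (isUnit_C.mpr (isUnit_iff_ne_zero.mpr hvx))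
      have hvd : v.natDegree = 0 := natDegree_eq_zero_of_isUnit hunit
      have ha2 : a₂ = 0 := by rw [← hvc2]; exact coeff_eq_zero_of_natDegree_lt (by omega)
      have hud : u.natDegree = 0 := by
        have h1 : (C (v.eval x) * u).natDegree = u.natDegree := natDegree_C_mul hvx
        have h2 : (C (u.eval x) * v).natDegree ≤ 0 := by
          calc (C (u.eval x) * v).natDegree ≤ (C (u.eval x)).natDegree + v.natDegree :=
                natDegree_mul_le
          _ ≤ 0 := by simp [hvd]
        have h3 : (C (v.eval x) * u).natDegree = (C (u.eval x) * v).natDegree := by rw [h]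
        omega
      have ha1 : a₁ = 0 := by rw [← huc2]; exact coeff_eq_zero_of_natDegree_lt (by omega)
      exact ha ⟨ha1, ha2⟩
  -- ramification at a finite point
  have hfin : ∀ x : K, 2 ≤ ramIdx u v (some x) ↔
      (b₁ * a₂ - b₂ * a₁) * x ^ 2 + (b₁ * c₂ - b₂ * c₁) = 0 := by
    intro x
    show 2 ≤ (C (v.eval x) * u - C (u.eval x) * v).rootMultiplicity x ↔ _
    rw [two_le_rootMultiplicity_iff' (hFxne x) x]
    have he : (C (v.eval x) * u - C (u.eval x) * v).eval x = 0 := by simp; ring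
    have hd : ((C (v.eval x) * u - C (u.eval x) * v).derivative).eval x
        = (b₁ * a₂ - b₂ * a₁) * x ^ 2 + (b₁ * c₂ - b₂ * c₁) := by
      rw [derivative_sub, derivative_C_mul, derivative_C_mul, hdu, hdv]
      simp only [eval_sub, eval_mul, eval_C]
      rw [hu, hv]; simp; ring
    rw [hd]
    exact ⟨fun h => h.2, fun h => ⟨he, h⟩⟩
  -- ramification at infinity
  have hUeq : X ^ (max u.natDegree v.natDegree - u.natDegree) * u.reverse
      = C c₁ * X ^ 2 + C b₁ * X + C a₁ := by
    rw [goal2, hu]; exact reverse_quad (hu ▸ hune)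
  have hVeq : X ^ (max u.natDegree v.natDegree - v.natDegree) * v.reverse
      = C c₂ * X ^ 2 + C b₂ * X + C a₂ := by
    rw [goal2, hv]; exact reverse_quad (hv ▸ hvne)
  have hGeq : C ((C c₂ * X ^ 2 + C b₂ * X + C a₂ : K[X]).eval 0) * (C c₁ * X ^ 2 + C b₁ * X + C a₁)
      - C ((C c₁ * X ^ 2 + C b₁ * X + C a₁ : K[X]).eval 0) * (C c₂ * X ^ 2 + C b₂ * X + C a₂)
      = C (a₂ * c₁ - a₁ * c₂) * X ^ 2 + C (b₁ * a₂ - b₂ * a₁) * X := by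
    have e1 : (C c₂ * X ^ 2 + C b₂ * X + C a₂ : K[X]).eval 0 = a₂ := by simp
    have e2 : (C c₁ * X ^ 2 + C b₁ * X + C a₁ : K[X]).eval 0 = a₁ := by simp
    rw [e1, e2]
    simp only [map_sub, map_mul]
    ring
  have hGne : C (a₂ * c₁ - a₁ * c₂) * X ^ 2 + C (b₁ * a₂ - b₂ * a₁) * X ≠ (0 : K[X]) := by
    intro h
    by_cases hA : b₁ * a₂ - b₂ * a₁ = 0
    · apply keyAD hA
      have := congrArg (fun p => coeff p 2) h
      simpa only [coeff_G2', coeff_zero] using this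
    · apply hA
      have := congrArg (fun p => coeff p 1) h
      simpa only [coeff_G1', coeff_zero] using this
  have hinf : 2 ≤ ramIdx u v none ↔ b₁ * a₂ - b₂ * a₁ = 0 := by
    show 2 ≤ Polynomial.rootMultiplicity 0 _ ↔ _
    rw [hUeq, hVeq, hGeq, two_le_rootMultiplicity_iff' hGne 0]
    constructor
    · intro h
      have := h.2
      simpa using this
    · intro h
      refine ⟨by simp, by simpa using h⟩
  have h2' : (2 : K) = 0 := h2
  by_cases hA : b₁ * a₂ - b₂ * a₁ = 0
  · -- ramified only at infinity
    have hB : b₁ * c₂ - b₂ * c₁ ≠ 0 := fun hB => keyAB ⟨hA, hB⟩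
    have hset : {P : Option K | 2 ≤ ramIdx u v P} = {none} := by
      ext P
      cases P with
      | none => simp [Set.mem_setOf_eq, hinf, hA]
      | some x => simp [Set.mem_setOf_eq, hfin x, hA, hB]
    rw [hset]; exact Set.ncard_singleton _
  · -- ramified at the unique root of A x² + B
    obtain ⟨r, hr⟩ := IsAlgClosed.exists_pow_nat_eq
      ((b₁ * c₂ - b₂ * c₁) * (b₁ * a₂ - b₂ * a₁)⁻¹) two_pos
    have hAr : (b₁ * a₂ - b₂ * a₁) * r ^ 2 + (b₁ * c₂ - b₂ * c₁) = 0 := by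
      have hinv : (b₁ * a₂ - b₂ * a₁) * ((b₁ * c₂ - b₂ * c₁) * (b₁ * a₂ - b₂ * a₁)⁻¹)
          = b₁ * c₂ - b₂ * c₁ := by field_simp
      rw [hr, hinv]
      linear_combination (b₁ * c₂ - b₂ * c₁) * h2'
    have hroot : ∀ x : K,
        (b₁ * a₂ - b₂ * a₁) * x ^ 2 + (b₁ * c₂ - b₂ * c₁) = 0 ↔ x = r := by
      intro x
      constructor
      · intro h
        have hx2 : (b₁ * a₂ - b₂ * a₁) * x ^ 2 = (b₁ * a₂ - b₂ * a₁) * r ^ 2 := by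
          linear_combination h - hAr
        have hx3 : x ^ 2 = r ^ 2 := mul_left_cancel₀ hA hx2
        have hx4 : (x - r) ^ 2 = 0 := by
          linear_combination hx3 + (r ^ 2 - x * r) * h2'
        have := pow_eq_zero_iff (two_ne_zero) |>.mp hx4
        exact sub_eq_zero.mp this
      · rintro rfl; exact hAr
    have hset : {P : Option K | 2 ≤ ramIdx u v P} = {some r} := by
      ext P
      cases P with
      | none => simp [Set.mem_setOf_eq, hinf, hA]
      | some x => simp [Set.mem_setOf_eq, hfin x, hroot x]
    rw [hset]; exact Set.ncard_singleton _
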